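/- Power-law asymptotics of the SPA degree-distribution constants: Let p ∈ (0,1], A1 > 0, A2 > 0 with pA1 < 1. Define c_0 = 1/(1+pA2) and, for i ≥ 1, c_i = c_{i−1}·p·(A1(i−1)+A2)/(1+p(A1·i+A2)). Then there exists a constant c > 0 (depending on p, A1, A2) such that c_i = (1+o(1))·c·i^{−(1+1/(pA1))} as i → ∞; equivalently, c_i·i^{1+1/(pA1)} → c as i → ∞. -/

import Mathlib

open Filter Finset Real

noncomputable section

/-- The constants `c_i` of the SPA degree distribution. -/
def spaC (p A1 A2 : ℝ) : ℕ → ℝ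
  | 0 => 1 / (1 + p * A2)
  | i + 1 => spaC p A1 A2 i * p * (A1 * i + A2) / (1 + p * (A1 * (i + 1) + A2))

lemma spaC_closed (p A1 A2 : ℝ) (hp0 : 0 < p) (hA1 : 0 < A1) (hA2 : 0 < A2) (i : ℕ) :
    spaC p A1 A2 i = (1 / (1 + p * A2)) *
      (∏ j ∈ Finset.range i, (A2 / A1 + j)) /
      (∏ j ∈ Finset.range i, (A2 / A1 + 1 / (p * A1) + 1 + j)) := by
  set a := A2 / A1 with ha_def
  set b := 1 / (p * A1) with hb_def
  have ha : 0 < a := div_pos hA2 hA1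
  have hb : 0 < b := by positivity
  induction i with
  | zero => simp [spaC]
  | succ i ih =>
    have hQ : (0:ℝ) < ∏ j ∈ Finset.range i, (a + b + 1 + j) := by
      apply Finset.prod_pos; intro j _; positivity
    have hD : (0:ℝ) < 1 + p * (A1 * (i + 1) + A2) := by positivity
    have hterm : (0:ℝ) < a + b + 1 + i := by positivity
    rw [spaC, ih, Finset.prod_range_succ, Finset.prod_range_succ]
    rw [ha_def, hb_def]
    field_simp
    ring

/-- power-law asymptotics of the SPA degree-distribution constants: there is
a constant `c > 0` with `c_i = (1+o(1)) c i^{-(1+1/(pA1))}`, i.e.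
`c_i i^{1+1/(pA1)} → c`. -/
theorem spaC_power_law
    (p A1 A2 : ℝ) (hp0 : 0 < p) (hp1 : p ≤ 1) (hA1 : 0 < A1) (hA2 : 0 < A2)
    (hpA1 : p * A1 < 1) :
    ∃ c > (0 : ℝ),
      Tendsto (fun i : ℕ => spaC p A1 A2 i * (i : ℝ) ^ ((1 : ℝ) + 1 / (p * A1)))
        atTop (nhds c) := by
  set a := A2 / A1 with ha_def
  set b := 1 / (p * A1) with hb_def
  have ha : 0 < a := div_pos hA2 hA1
  have hb : 0 < b := by positivity
  set c0 : ℝ := 1 / (1 + p * A2) with hc0_def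
  have hc0 : 0 < c0 := by positivity
  have hΓa : 0 < Real.Gamma a := Real.Gamma_pos_of_pos ha
  have hΓab : 0 < Real.Gamma (a + b) := Real.Gamma_pos_of_pos (by positivity)
  refine ⟨c0 * (a + b) * (Real.Gamma (a + b) / Real.Gamma a), by positivity, ?_⟩
  rw [← tendsto_add_atTop_iff_nat 1]
  -- key identity for n ≥ 1
  have key : ∀ n : ℕ, 1 ≤ n →
      spaC p A1 A2 (n + 1) * ((n:ℝ) + 1) ^ ((1:ℝ) + b)
        = c0 * (a + b) * (Real.GammaSeq (a + b) (n + 1) / Real.GammaSeq a n) *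
          ((n:ℝ) / ((n:ℝ) + 1)) ^ a := by
    intro n hn
    have hx : (0:ℝ) < (n:ℝ) := by exact_mod_cast hn
    have hx1 : (0:ℝ) < (n:ℝ) + 1 := by positivity
    have hP1 : (0:ℝ) < ∏ j ∈ Finset.range (n + 1), (a + (j:ℝ)) := by
      apply Finset.prod_pos; intro j _; positivity
    have hP2 : (0:ℝ) < ∏ j ∈ Finset.range (n + 1), (a + b + 1 + (j:ℝ)) := by
      apply Finset.prod_pos; intro j _; positivity
    have hsplit : ∏ j ∈ Finset.range (n + 2), (a + b + (j:ℝ))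
        = (a + b) * ∏ j ∈ Finset.range (n + 1), (a + b + 1 + (j:ℝ)) := by
      rw [Finset.prod_range_succ']
      have : ∀ j ∈ Finset.range (n + 1), (a + b + ((j:ℕ) + 1 : ℕ)) = (a + b + 1 + (j:ℝ)) := by
        intro j _; push_cast; ring
      rw [Finset.prod_congr rfl this]
      push_cast; ring
    rw [spaC_closed p A1 A2 hp0 hA1 hA2, Real.GammaSeq, Real.GammaSeq, ← ha_def, ← hb_def, ← hc0_def]
    rw [hsplit]
    have e1 : ((n:ℝ) + 1) ^ ((1:ℝ) + b) = ((n:ℝ) + 1) * ((n:ℝ) + 1) ^ b := by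
      rw [Real.rpow_add hx1, Real.rpow_one]
    have e2 : (((n:ℕ) + 1 : ℕ) : ℝ) ^ (a + b) = ((n:ℝ) + 1) ^ a * ((n:ℝ) + 1) ^ b := by
      push_cast
      rw [Real.rpow_add hx1]
    have e3 : ((n:ℝ) / ((n:ℝ) + 1)) ^ a = (n:ℝ) ^ a / ((n:ℝ) + 1) ^ a :=
      Real.div_rpow hx.le hx1.le a
    have e4 : (((n + 1).factorial : ℕ) : ℝ) = ((n:ℝ) + 1) * (n.factorial : ℝ) := by
      push_cast [Nat.factorial_succ]; ring
    rw [e1, e2, e3, e4]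
    have hna : (0:ℝ) < (n:ℝ) ^ a := Real.rpow_pos_of_pos hx a
    have hn1a : (0:ℝ) < ((n:ℝ) + 1) ^ a := Real.rpow_pos_of_pos hx1 a
    have hn1b : (0:ℝ) < ((n:ℝ) + 1) ^ b := Real.rpow_pos_of_pos hx1 b
    have hfac : (0:ℝ) < (n.factorial : ℝ) := by exact_mod_cast n.factorial_pos
    have hab : (0:ℝ) < a + b := by positivity
    clear ha_def hb_def hc0_def hΓa hΓab
    clear_value a b c0
    field_simp
  -- limits
  have hG1 : Tendsto (fun n : ℕ => Real.GammaSeq (a + b) (n + 1)) atTop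
      (nhds (Real.Gamma (a + b))) :=
    (Real.GammaSeq_tendsto_Gamma (a + b)).comp (tendsto_add_atTop_nat 1)
  have hG2 : Tendsto (fun n : ℕ => Real.GammaSeq a n) atTop (nhds (Real.Gamma a)) :=
    Real.GammaSeq_tendsto_Gamma a
  have hfrac : Tendsto (fun n : ℕ => (n:ℝ) / ((n:ℝ) + 1)) atTop (nhds 1) := by
    have h0 : Tendsto (fun n : ℕ => 1 / ((n:ℝ) + 1)) atTop (nhds 0) :=
      tendsto_one_div_add_atTop_nhds_zero_nat
    have := (tendsto_const_nhds : Tendsto (fun _ : ℕ => (1:ℝ)) atTop (nhds 1)).sub h0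
    rw [sub_zero] at this
    refine this.congr fun n => ?_
    have hx1 : ((n:ℝ) + 1) ≠ 0 := by positivity
    field_simp
    ring
  have hpow : Tendsto (fun n : ℕ => ((n:ℝ) / ((n:ℝ) + 1)) ^ a) atTop (nhds 1) := by
    have := hfrac.rpow_const (p := a) (Or.inl one_ne_zero)
    rwa [Real.one_rpow] at this
  have hmain : Tendsto
      (fun n : ℕ => c0 * (a + b) * (Real.GammaSeq (a + b) (n + 1) / Real.GammaSeq a n) *
          ((n:ℝ) / ((n:ℝ) + 1)) ^ a) atTop
      (nhds (c0 * (a + b) * (Real.Gamma (a + b) / Real.Gamma a))) := by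
    have := ((tendsto_const_nhds : Tendsto (fun _ : ℕ => c0 * (a + b)) atTop (nhds (c0 * (a + b)))).mul (hG1.div hG2 hΓa.ne')).mul hpow
    simpa using this
  refine hmain.congr' ?_
  filter_upwards [eventually_ge_atTop 1] with n hn
  rw [← key n hn]
  push_cast
  ring_nf
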